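/- Let A be a commutative ring and let x, y be a regular sequence on A (x is a non-zero-divisor on A and y is a non-zero-divisor on A/xA). If A is derived x-complete, then y, x is also a regular sequence on A. -/

import Mathlib

open scoped BigOperators

/-- A δ-structure on a commutative `ℤ_(p)`-algebra `A`: a map `δ : A → A` with
`δ(0) = δ(1) = 0`, `δ(a+b) = δ a + δ b + (a^p + b^p - (a+b)^p)/p` (expressed via binomial
coefficients divided by the prime `p`), and
`δ(ab) = a^p δ b + b^p δ a + p δ a δ b`.  The field `isUnit_of_not_dvd` expresses that `A`
is a `ℤ_(p)`-algebra. -/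
structure DeltaStructure (A : Type) [CommRing A] (p : ℕ) : Type where
  δ : A → A
  delta_zero : δ 0 = 0
  delta_one : δ 1 = 0
  delta_add : ∀ a b : A, δ (a + b) = δ a + δ b -
      ∑ i ∈ Finset.Ioo 0 p, (((p.choose i) / p : ℕ) : A) * a ^ i * b ^ (p - i)
  delta_mul : ∀ a b : A, δ (a * b) =
      a ^ p * δ b + b ^ p * δ a + (p : A) * δ a * δ b
  isUnit_of_not_dvd : ∀ n : ℤ, ¬ ((p : ℤ) ∣ n) → IsUnit ((n : A))

/-- The Frobenius lift `φ(a) = a^p + p·δ(a)` associated to a δ-structure. -/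
def DeltaStructure.phi {A : Type} [CommRing A] {p : ℕ} (D : DeltaStructure A p) (a : A) : A :=
  a ^ p + (p : A) * D.δ a

/-- An `A`-module `M` is derived `f`-complete iff the map `(xₙ) ↦ (xₙ - f·xₙ₊₁)` on `M^ℕ`
is bijective (equivalently, `Hom(A[1/f], M) = Ext¹(A[1/f], M) = 0`). -/
def DerivedFComplete {A : Type} [CommRing A] (f : A) (M : Type) [AddCommGroup M]
    [Module A M] : Prop :=
  Function.Bijective (fun x : ℕ → M => fun n => x n - f • x (n + 1))

open scoped Pointwise in
private lemma smul_top_mem' {A : Type} [CommRing A] {x c : A}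
    (h : c ∈ x • (⊤ : Submodule A A)) : ∃ d, c = x * d := by
  rw [show x • (⊤ : Submodule A A) = Ideal.span {x} by
    rw [← Submodule.ideal_span_singleton_smul, smul_eq_mul, Ideal.mul_top]] at h
  exact Ideal.mem_span_singleton'.mp h |>.imp fun d hd => by linear_combination -hd

theorem statement3 {A : Type} [CommRing A] (x y : A)
    (hreg : RingTheory.Sequence.IsWeaklyRegular A [x, y])
    (hc : DerivedFComplete x A) :
    RingTheory.Sequence.IsWeaklyRegular A [y, x] := by
  replace hc : Function.Bijective (fun z : ℕ → A => fun n => z n - x • z (n + 1)) := hc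
  rw [RingTheory.Sequence.isWeaklyRegular_cons_iff,
    RingTheory.Sequence.isWeaklyRegular_singleton_iff] at hreg
  obtain ⟨hx, hy⟩ := hreg
  have key : ∀ c : A, y * c = 0 → ∃ c', c = x * c' ∧ y * c' = 0 := by
    intro c hcz
    have h1 : y • (Submodule.Quotient.mk c : QuotSMulTop x A) = 0 := by
      rw [← Submodule.Quotient.mk_smul, smul_eq_mul, hcz, Submodule.Quotient.mk_zero]
    have h2 : (Submodule.Quotient.mk c : QuotSMulTop x A) = 0 := by
      apply hy; simpa using h1
    rw [Submodule.Quotient.mk_eq_zero] at h2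
    obtain ⟨c', hc'⟩ := smul_top_mem' h2
    refine ⟨c', hc', hx ?_⟩
    simp only [smul_eq_mul, mul_zero]
    rw [show x * (y * c') = y * (x * c') by ring, ← hc', hcz]
  have hyA : IsSMulRegular A y := by
    intro a b hab
    have hz : y * (a - b) = 0 := by
      simp only [smul_eq_mul] at hab
      linear_combination hab
    rw [← sub_eq_zero]
    choose f hf1 hf2 using key
    let s : ℕ → {c : A // y * c = 0} := fun n =>
      Nat.rec ⟨a - b, hz⟩ (fun _ p => ⟨f p.1 p.2, hf2 p.1 p.2⟩) n
    have hs : ∀ n, (s n).1 = x * (s (n+1)).1 := fun n => hf1 (s n).1 (s n).2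
    have heq : (fun n => (s n).1) = (fun _ => 0) := by
      apply hc.injective
      funext n
      simp only [smul_eq_mul]
      rw [← hs n]
      simp
    exact congrFun heq 0
  refine (RingTheory.Sequence.isWeaklyRegular_cons_iff A y [x]).mpr ⟨hyA, ?_⟩
  rw [RingTheory.Sequence.isWeaklyRegular_singleton_iff]
  intro a b hab
  obtain ⟨a, rfl⟩ := Submodule.Quotient.mk_surjective _ a
  obtain ⟨b, rfl⟩ := Submodule.Quotient.mk_surjective _ b
  simp only at hab
  rw [← sub_eq_zero, ← Submodule.Quotient.mk_smul, ← Submodule.Quotient.mk_smul,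
    ← Submodule.Quotient.mk_sub, Submodule.Quotient.mk_eq_zero] at hab
  obtain ⟨c, hcc⟩ := smul_top_mem' hab
  -- x • a - x • b = y * c
  rw [← sub_eq_zero, ← Submodule.Quotient.mk_sub, Submodule.Quotient.mk_eq_zero]
  have h1 : y • (Submodule.Quotient.mk c : QuotSMulTop x A) = 0 := by
    rw [← Submodule.Quotient.mk_smul, Submodule.Quotient.mk_eq_zero, smul_eq_mul, ← hcc]
    have : x • a - x • b = x • (a - b) := by simp only [smul_eq_mul]; ring
    rw [this]
    exact Submodule.smul_mem_pointwise_smul _ _ _ trivial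
  have h2 : (Submodule.Quotient.mk c : QuotSMulTop x A) = 0 := by
    apply hy; simpa using h1
  rw [Submodule.Quotient.mk_eq_zero] at h2
  obtain ⟨c', hc'⟩ := smul_top_mem' h2
  have hab2 : a - b = y * c' := by
    apply hx
    simp only [smul_eq_mul]
    rw [show x * (y * c') = y * (x * c') by ring, ← hc', ← hcc]
    simp only [smul_eq_mul]; ring
  rw [hab2, ← smul_eq_mul]
  exact Submodule.smul_mem_pointwise_smul _ _ _ trivial
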